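/- arXiv:quant-ph/0210078 — 2 statements merged into one kernel-verified Lean document; each statement's English description precedes it below -/
import Mathlib

section
/- For the Bloch equations with controller (u_x, u_y, u_z): the fixed point (x, y, z) of ṙ = (A+B)r + c, where A is the skew-symmetric matrix with entries A₁₂ = −u_z, A₁₃ = u_y, A₂₃ = −u_x, B = diag(−γ₂, −γ₂, −γ₁), c = (0,0,γ₁), satisfies the ellipsoid equation (z − 1/2)² + (γ₂/γ₁)(x² + y²) = 1/4, provided u_z = 0. -/
theorem bloch_fixed_point_on_ellipsoid (γ₁ γ₂ ux uy uz x y z : ℝ)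
    (hγ₁ : 0 < γ₁) (hγ₂ : 0 < γ₂) (huz : uz = 0)
    (h1 : -γ₂ * x + (-uz * y + uy * z) = 0)
    (h2 : -γ₂ * y + (uz * x - ux * z) = 0)
    (h3 : -γ₁ * z + (-uy * x + ux * y) + γ₁ = 0) :
    (z - 1 / 2) ^ 2 + (γ₂ / γ₁) * (x ^ 2 + y ^ 2) = 1 / 4 := by
  subst huz
  have hx : γ₂ * x = uy * z := by linarith
  have hy : γ₂ * y = -(ux * z) := by linarith
  have hkey : γ₁ * (1 - z) * γ₂ = (ux ^ 2 + uy ^ 2) * z := by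
    linear_combination γ₂ * h3 + uy * hx - ux * hy
  have hsq : γ₂ ^ 2 * (x ^ 2 + y ^ 2) = (ux ^ 2 + uy ^ 2) * z ^ 2 := by
    linear_combination (γ₂ * x + uy * z) * hx + (γ₂ * y - ux * z) * hy
  have h1' : γ₁ ≠ 0 := hγ₁.ne'
  have h2' : γ₂ ≠ 0 := hγ₂.ne'
  have hfin : γ₂ * (x ^ 2 + y ^ 2) = γ₁ * (1 - z) * z := by
    apply mul_left_cancel₀ h2'
    linear_combination hsq - z * hkey
  field_simp
  linear_combination 16 * hfin
end

section
/- The maximally mixed state (0,0,0) is a limit point of the ellipsoid {(x,y,z) : (z−1/2)² + (γ₂/γ₁)(x²+y²) = 1/4} but for fixed finite controls (u_x,u_y) with z ≠ 0 the fixed point never equals (0,0,0); as the control magnitude tends to infinity the fixed point approaches (0,0,0). -/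
theorem maximally_mixed_limit_of_fixed_points (γ₁ γ₂ : ℝ)
    (hγ₁ : 0 < γ₁) (hγ₂ : 0 < γ₂) :
    ((0, 0, 0) : ℝ × ℝ × ℝ) ∈ closure
      {p : ℝ × ℝ × ℝ | ∃ ux uy uz : ℝ,
        -γ₂ * p.1 + (-uz * p.2.1 + uy * p.2.2) = 0 ∧
        -γ₂ * p.2.1 + (uz * p.1 - ux * p.2.2) = 0 ∧
        -γ₁ * p.2.2 + (-uy * p.1 + ux * p.2.1) + γ₁ = 0} ∧
    ¬ ∃ ux uy uz : ℝ,
        -γ₂ * (0 : ℝ) + (-uz * 0 + uy * 0) = 0 ∧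
        -γ₂ * (0 : ℝ) + (uz * 0 - ux * 0) = 0 ∧
        -γ₁ * (0 : ℝ) + (-uy * 0 + ux * 0) + γ₁ = 0 := by
  constructor
  · rw [Metric.mem_closure_iff]
    intro ε hε
    set u : ℝ := max (γ₁ / ε) (Real.sqrt (γ₁ * γ₂ / ε)) + 1 with hu
    have hu0 : 0 < u := by
      have h1 : (0:ℝ) ≤ Real.sqrt (γ₁ * γ₂ / ε) := Real.sqrt_nonneg _
      have h2 : (0:ℝ) ≤ max (γ₁ / ε) (Real.sqrt (γ₁ * γ₂ / ε)) := le_trans h1 (le_max_right _ _)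
      rw [hu]; linarith
    have hD : 0 < γ₁ * γ₂ + u ^ 2 := by positivity
    have hDne : γ₁ * γ₂ + u ^ 2 ≠ 0 := ne_of_gt hD
    refine ⟨(0, -u * γ₁ / (γ₁ * γ₂ + u ^ 2), γ₁ * γ₂ / (γ₁ * γ₂ + u ^ 2)), ⟨u, 0, 0, ?_, ?_, ?_⟩, ?_⟩
    · simp
    · field_simp; ring
    · field_simp; ring
    · -- distance estimate
      have hy : |(-u * γ₁ / (γ₁ * γ₂ + u ^ 2))| < ε := by
        rw [abs_div, abs_of_pos hD]
        rw [div_lt_iff₀ hD]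
        have h1 : γ₁ / ε < u := by
          have := le_max_left (γ₁ / ε) (Real.sqrt (γ₁ * γ₂ / ε)); linarith
        have h2 : γ₁ < ε * u := by
          rw [div_lt_iff₀ hε] at h1; linarith [h1]
        have : |(-u * γ₁)| = u * γ₁ := by
          rw [abs_of_nonpos (by nlinarith : -u * γ₁ ≤ 0)]; ring
        rw [this]
        nlinarith [mul_pos hε (mul_pos hγ₁ hγ₂), mul_lt_mul_of_pos_left h2 hu0]
      have hz : |γ₁ * γ₂ / (γ₁ * γ₂ + u ^ 2)| < ε := by
        rw [abs_div, abs_of_pos hD, abs_of_pos (by positivity : (0:ℝ) < γ₁ * γ₂)]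
        rw [div_lt_iff₀ hD]
        have h1 : Real.sqrt (γ₁ * γ₂ / ε) < u := by
          have := le_max_right (γ₁ / ε) (Real.sqrt (γ₁ * γ₂ / ε)); linarith
        have h2 : γ₁ * γ₂ / ε < u ^ 2 := by
          have hs := Real.sq_sqrt (by positivity : (0:ℝ) ≤ γ₁ * γ₂ / ε)
          have hsn : 0 ≤ Real.sqrt (γ₁ * γ₂ / ε) := Real.sqrt_nonneg _
          nlinarith
        rw [div_lt_iff₀ hε] at h2
        nlinarith [mul_pos hε (mul_pos hγ₁ hγ₂)]
      rw [Prod.dist_eq, Prod.dist_eq]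
      simp only [Real.dist_eq]
      simp only [zero_sub, abs_neg, sub_zero, abs_zero]
      have : |-(- u * γ₁ / (γ₁ * γ₂ + u ^ 2))| = |(-u * γ₁ / (γ₁ * γ₂ + u ^ 2))| := abs_neg _
      refine max_lt hε (max_lt ?_ ?_)
      · exact hy
      · exact hz
  · rintro ⟨ux, uy, uz, h1, h2, h3⟩
    simp at h3
    exact absurd h3 (ne_of_gt hγ₁)
end
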